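/- For each natural number m ≥ 2, the polynomial f(z) = z^m - z^{m-1} - ... - z - 1 is irreducible over the integers. -/

import Mathlib

open Polynomial

-- multiset helpers
lemma ms_prod_nonneg (S : Multiset ℝ) (h : ∀ x ∈ S, (0:ℝ) ≤ x) : 0 ≤ S.prod := by
  induction S using Multiset.induction_on with
  | empty => simp
  | cons a T ih =>
    rw [Multiset.prod_cons]
    exact mul_nonneg (h a (Multiset.mem_cons_self a T))
      (ih fun x hx => h x (Multiset.mem_cons_of_mem hx))

lemma ms_prod_le_one (S : Multiset ℝ) (h : ∀ x ∈ S, (0:ℝ) ≤ x ∧ x ≤ 1) : S.prod ≤ 1 := by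
  induction S using Multiset.induction_on with
  | empty => simp
  | cons a T ih =>
    rw [Multiset.prod_cons]
    have hT : ∀ x ∈ T, (0:ℝ) ≤ x ∧ x ≤ 1 := fun x hx => h x (Multiset.mem_cons_of_mem hx)
    have ha := h a (Multiset.mem_cons_self a T)
    calc a * T.prod ≤ 1 * 1 :=
          mul_le_mul ha.2 (ih hT) (ms_prod_nonneg T fun x hx => (hT x hx).1) zero_le_one
      _ = 1 := by ring
  
lemma ms_pow_le_prod (S : Multiset ℝ) (a : ℝ) (ha : 0 ≤ a) (h : ∀ x ∈ S, a ≤ x) :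
    a ^ (Multiset.card S) ≤ S.prod := by
  induction S using Multiset.induction_on with
  | empty => simp
  | cons b T ih =>
    rw [Multiset.prod_cons, Multiset.card_cons, pow_succ, mul_comm (a ^ _) a]
    have hT : ∀ x ∈ T, a ≤ x := fun x hx => h x (Multiset.mem_cons_of_mem hx)
    exact mul_le_mul (h b (Multiset.mem_cons_self b T)) (ih hT) (pow_nonneg ha _)
      (le_trans ha (h b (Multiset.mem_cons_self b T)))

lemma ms_prod_lt_one (S : Multiset ℝ) (hc : 0 < Multiset.card S)
    (h : ∀ x ∈ S, (0:ℝ) ≤ x ∧ x < 1) : S.prod < 1 := by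
  induction S using Multiset.induction_on with
  | empty => simp at hc
  | cons a T ih =>
    rw [Multiset.prod_cons]
    have hT : ∀ x ∈ T, (0:ℝ) ≤ x ∧ x ≤ 1 := fun x hx =>
      ⟨(h x (Multiset.mem_cons_of_mem hx)).1, le_of_lt (h x (Multiset.mem_cons_of_mem hx)).2⟩
    have ha := h a (Multiset.mem_cons_self a T)
    calc a * T.prod ≤ a * 1 := by
          have := ms_prod_le_one T hT
          nlinarith [ms_prod_nonneg T fun x hx => (hT x hx).1]
      _ < 1 := by linarith [ha.2]

-- key root identity
lemma root_identity (m : ℕ) (z : ℂ) (hz : z ^ m - ∑ i ∈ Finset.range m, z ^ i = 0) :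
    z ^ m * (2 - z) = 1 := by
  have hg : (∑ i ∈ Finset.range m, z ^ i) * (z - 1) = z ^ m - 1 := geom_sum_mul z m
  linear_combination (1 - z) * hz - hg

lemma abs_identity (m : ℕ) (z : ℂ) (h : z ^ m * (2 - z) = 1) :
    ‖z‖ ^ m * ‖2 - z‖ = 1 := by
  have := congrArg norm h
  simpa [map_mul, map_pow] using this

lemma eq_one_of_abs_one (z : ℂ) (h1 : ‖z‖ = 1) (h2 : ‖2 - z‖ = 1) :
    z = 1 := by
  have e1 : Complex.normSq z = 1 := by
    rw [← Complex.sq_norm, h1]; norm_num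
  have e2 : Complex.normSq (2 - z) = 1 := by
    rw [← Complex.sq_norm, h2]; norm_num
  rw [Complex.normSq_apply] at e1
  rw [Complex.normSq_apply, Complex.sub_re, Complex.sub_im] at e2
  norm_num at e2
  have hx : z.re = 1 := by nlinarith
  have hy : z.im = 0 := by nlinarith
  exact Complex.ext (by simp [hx]) (by simp [hy])

-- real analysis of the modulus equation
lemma big_root_bound (m : ℕ) (hm : 2 ≤ m) (r s : ℝ) (hr : 1 < r) (hs : 0 ≤ s)
    (hrs : r ^ m * s = 1) (htri : 2 - s ≤ r) : 2 - (2/3 : ℝ) ^ m ≤ r := by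
  have hrm1 : (1:ℝ) < r ^ m := one_lt_pow₀ hr (by omega)
  have hs1 : s < 1 := by nlinarith
  have hs0 : 0 < s := by
    rcases hs.lt_or_eq with h | h; · exact h
    · exfalso; rw [← h] at hrs; simp at hrs
  -- step 1: s < 1/2
  have hhalf : s < 1/2 := by
    by_contra hc
    push_neg at hc
    have h2s : (1:ℝ) ≤ 2 - s := by linarith
    have hp2 : (2 - s)^2 ≤ (2-s)^m := pow_le_pow_right₀ h2s hm
    have hrge : (2 - s)^m ≤ r^m := pow_le_pow_left₀ (by linarith) htri m
    have : (2-s)^2 * s ≤ 1 := by nlinarith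
    nlinarith [sq_nonneg (s - 1/2)]
  -- step 2: r > 3/2 hence s ≤ (2/3)^m
  have hr32 : (3/2 : ℝ) ≤ r := by linarith
  have : ((3:ℝ)/2)^m ≤ r^m := pow_le_pow_left₀ (by norm_num) hr32 m
  have hsle : s ≤ (2/3 : ℝ)^m := by
    have h23 : (2/3 : ℝ)^m * (3/2 : ℝ)^m = 1 := by
      rw [← mul_pow]; norm_num
    have key : s * (3/2:ℝ)^m ≤ 1 := by nlinarith
    nlinarith [pow_pos (by norm_num : (0:ℝ) < 2/3) m]
  linarith

lemma small_root_bound (m : ℕ) (r s : ℝ) (hr : r < 1) (hr0 : 0 ≤ r)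
    (hrs : r ^ m * s = 1) (htri : s ≤ 2 + r) : (1/3 : ℝ) ≤ r ^ m := by
  have hs3 : s ≤ 3 := by linarith
  have h0 : 0 < r ^ m := by
    by_contra hc
    push_neg at hc
    have : r ^ m = 0 := le_antisymm hc (pow_nonneg hr0 m)
    rw [this] at hrs; simp at hrs
  have hs0 : 0 < s := by nlinarith
  nlinarith

-- polynomial basics
lemma aeval_f (m : ℕ) (z : ℂ) :
    Polynomial.aeval z ((X : ℤ[X]) ^ m - ∑ i ∈ Finset.range m, X ^ i) =
      z ^ m - ∑ i ∈ Finset.range m, z ^ i := by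
  rw [map_sub, map_pow, Polynomial.aeval_X, map_sum]
  simp

lemma root_abs_ne_one (m : ℕ) (hm : 2 ≤ m) (z : ℂ)
    (hz : Polynomial.aeval z ((X : ℤ[X]) ^ m - ∑ i ∈ Finset.range m, X ^ i) = 0) :
    ‖z‖ ≠ 1 := by
  rw [aeval_f] at hz
  have hid := root_identity m z hz
  intro h1
  have habs := abs_identity m z hid
  rw [h1, one_pow, one_mul] at habs
  have hz1 : z = 1 := eq_one_of_abs_one z h1 habs
  rw [hz1] at hz
  simp only [one_pow, Finset.sum_const, Finset.card_range, nsmul_eq_mul, mul_one] at hz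
  have : (m:ℂ) = 1 := by linear_combination -hz
  have : (m:ℕ) = 1 := by exact_mod_cast this
  omega

lemma f_monic (m : ℕ) (hm : 2 ≤ m) :
    ((X : ℤ[X]) ^ m - ∑ i ∈ Finset.range m, X ^ i).Monic := by
  apply Polynomial.monic_X_pow_sub
  apply lt_of_le_of_lt (Polynomial.degree_sum_le _ _)
  rw [Finset.sup_lt_iff (by exact_mod_cast WithBot.bot_lt_coe m : (⊥:WithBot ℕ) < (m:ℕ))]
  intro i hi
  rw [Polynomial.degree_X_pow]
  exact_mod_cast Finset.mem_range.mp hi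

lemma f_natDegree (m : ℕ) (hm : 2 ≤ m) :
    ((X : ℤ[X]) ^ m - ∑ i ∈ Finset.range m, X ^ i).natDegree = m := by
  have hlt : (∑ i ∈ Finset.range m, (X:ℤ[X]) ^ i).degree < ((X:ℤ[X]) ^ m).degree := by
    rw [Polynomial.degree_X_pow]
    apply lt_of_le_of_lt (Polynomial.degree_sum_le _ _)
    rw [Finset.sup_lt_iff (by exact_mod_cast WithBot.bot_lt_coe m : (⊥:WithBot ℕ) < (m:ℕ))]
    intro i hi
    rw [Polynomial.degree_X_pow]
    exact_mod_cast Finset.mem_range.mp hi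
  have := Polynomial.degree_sub_eq_left_of_degree_lt hlt
  rw [Polynomial.degree_X_pow] at this
  exact Polynomial.natDegree_eq_of_degree_eq_some this

lemma f_eval_zero (m : ℕ) (hm : 2 ≤ m) :
    ((X : ℤ[X]) ^ m - ∑ i ∈ Finset.range m, X ^ i).eval 0 = -1 := by
  rw [Polynomial.eval_sub, Polynomial.eval_pow, Polynomial.eval_X,
    Polynomial.eval_finset_sum]
  simp only [Polynomial.eval_pow, Polynomial.eval_X]
  rw [zero_pow (by omega : m ≠ 0), Finset.sum_eq_single 0]
  · simp
  · intro b _ hb; exact zero_pow hb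
  · intro h; exact absurd (Finset.mem_range.mpr (by omega)) h

lemma prod_abs_roots_eq_one (g : ℤ[X]) (hg : g.Monic) (hg0 : (g.eval 0).natAbs = 1) :
    ((g.map (Int.castRingHom ℂ)).roots.map norm).prod = 1 := by
  set G := g.map (Int.castRingHom ℂ) with hG
  have hGm : G.Monic := hg.map _
  have hsp : G.Splits := IsAlgClosed.splits G
  have hc0 := hsp.coeff_zero_eq_prod_roots_of_monic hGm
  have habs : ‖G.coeff 0‖ = 1 := by
    rw [hG, Polynomial.coeff_map]
    simp only [Int.coe_castRingHom]
    rw [Complex.norm_intCast]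
    rw [Polynomial.coeff_zero_eq_eval_zero]
    rw [← Int.cast_abs]
    have h1 : |g.eval 0| = (1:ℤ) := by rw [Int.abs_eq_natAbs, hg0]; rfl
    rw [h1]; norm_num
  rw [hc0] at habs
  rw [norm_mul, norm_pow] at habs
  simp only [norm_neg, norm_one, one_pow, one_mul] at habs
  rw [← habs]
  exact (map_multiset_prod (normHom (α := ℂ)).toMonoidHom G.roots).symm

lemma roots_card_eq (g : ℤ[X]) :
    Multiset.card (g.map (Int.castRingHom ℂ)).roots = g.natDegree := by
  rw [Polynomial.splits_iff_card_roots.mp (IsAlgClosed.splits _)]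
  exact Polynomial.natDegree_map_eq_of_injective Int.cast_injective g

lemma aeval_of_mem_roots (g : ℤ[X]) (hg : g ≠ 0) (z : ℂ)
    (hz : z ∈ (g.map (Int.castRingHom ℂ)).roots) : Polynomial.aeval z g = 0 := by
  have := (Polynomial.mem_roots (by
    simpa using (Polynomial.map_ne_zero_iff (f := Int.castRingHom ℂ)
      Int.cast_injective).mpr hg)).mp hz
  rw [Polynomial.IsRoot, Polynomial.eval_map, ← algebraMap_int_eq,
    ← Polynomial.aeval_def] at this
  exact this

lemma exists_big_root (g : ℤ[X]) (hg : g.Monic) (hd : 0 < g.natDegree)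
    (hg0 : (g.eval 0).natAbs = 1)
    (hne : ∀ z : ℂ, Polynomial.aeval z g = 0 → ‖z‖ ≠ 1) :
    ∃ z ∈ (g.map (Int.castRingHom ℂ)).roots, 1 < ‖z‖ := by
  by_contra hc
  push_neg at hc
  have hprod := prod_abs_roots_eq_one g hg hg0
  have hlt : ((g.map (Int.castRingHom ℂ)).roots.map norm).prod < 1 := by
    apply ms_prod_lt_one
    · rw [Multiset.card_map, roots_card_eq]; exact hd
    · intro x hx
      obtain ⟨z, hz, rfl⟩ := Multiset.mem_map.mp hx
      refine ⟨norm_nonneg z, ?_⟩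
      exact lt_of_le_of_ne (hc z hz) (hne z (aeval_of_mem_roots g hg.ne_zero z hz))
  rw [hprod] at hlt
  exact absurd hlt (by norm_num)

lemma final_ineq (m : ℕ) (hm : 2 ≤ m) :
    1 < ((2 - (2/3:ℝ)^m)^m)^2 * (1/3:ℝ)^(m-2) := by
  rcases Nat.lt_or_ge m 4 with h4 | h4
  · interval_cases m <;> norm_num
  · have ha : (2/3:ℝ)^m ≤ (2/3:ℝ)^4 :=
      pow_le_pow_of_le_one (by norm_num) (by norm_num) h4
    have ht : (146/81 : ℝ) ≤ 2 - (2/3:ℝ)^m := by norm_num at ha ⊢; linarith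
    have ht0 : (0:ℝ) ≤ 2 - (2/3:ℝ)^m := by linarith
    have ht2 : (3:ℝ) ≤ (2 - (2/3:ℝ)^m)^2 := by nlinarith
    have h3m : (3:ℝ)^m ≤ ((2 - (2/3:ℝ)^m)^2)^m :=
      pow_le_pow_left₀ (by norm_num) ht2 m
    have hkey : (3:ℝ)^m * (1/3:ℝ)^(m-2) = 9 := by
      obtain ⟨k, rfl⟩ : ∃ k, m = k + 2 := ⟨m - 2, by omega⟩
      rw [Nat.add_sub_cancel, pow_add, mul_comm ((3:ℝ)^k) _, mul_assoc, ← mul_pow]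
      norm_num
    have hp : (0:ℝ) < (1/3:ℝ)^(m-2) := by positivity
    calc (1:ℝ) < 9 := by norm_num
      _ = (3:ℝ)^m * (1/3:ℝ)^(m-2) := hkey.symm
      _ ≤ ((2 - (2/3:ℝ)^m)^2)^m * (1/3:ℝ)^(m-2) := by
          exact mul_le_mul_of_nonneg_right h3m hp.le
      _ = ((2 - (2/3:ℝ)^m)^m)^2 * (1/3:ℝ)^(m-2) := by rw [← pow_mul, ← pow_mul, Nat.mul_comm]

lemma no_factorization (m : ℕ) (hm : 2 ≤ m) (g h : ℤ[X]) (hg : g.Monic) (hh : h.Monic)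
    (hdg : 0 < g.natDegree) (hdh : 0 < h.natDegree)
    (hfac : (X : ℤ[X]) ^ m - ∑ i ∈ Finset.range m, X ^ i = g * h) : False := by
  classical
  set f : ℤ[X] := (X : ℤ[X]) ^ m - ∑ i ∈ Finset.range m, X ^ i with hf
  have hfm : f.Monic := f_monic m hm
  have hf0 : f.eval 0 = -1 := f_eval_zero m hm
  have hgh0 : g.eval 0 * h.eval 0 = -1 := by rw [← Polynomial.eval_mul, ← hfac, hf0]
  have hna : (g.eval 0).natAbs * (h.eval 0).natAbs = 1 := by
    rw [← Int.natAbs_mul, hgh0]; rfl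
  have hg0 : (g.eval 0).natAbs = 1 := Nat.eq_one_of_mul_eq_one_right hna
  have hh0 : (h.eval 0).natAbs = 1 := Nat.eq_one_of_mul_eq_one_left hna
  have hroot_g : ∀ z : ℂ, Polynomial.aeval z g = 0 → Polynomial.aeval z f = 0 := fun z hz => by
    rw [hfac, map_mul, hz, zero_mul]
  have hroot_h : ∀ z : ℂ, Polynomial.aeval z h = 0 → Polynomial.aeval z f = 0 := fun z hz => by
    rw [hfac, map_mul, hz, mul_zero]
  obtain ⟨zg, hzg_mem, hzg⟩ := exists_big_root g hg hdg hg0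
    (fun z hz => root_abs_ne_one m hm z (hroot_g z hz))
  obtain ⟨zh, hzh_mem, hzh⟩ := exists_big_root h hh hdh hh0
    (fun z hz => root_abs_ne_one m hm z (hroot_h z hz))
  set F := f.map (Int.castRingHom ℂ) with hF
  have hFgh : F = g.map (Int.castRingHom ℂ) * h.map (Int.castRingHom ℂ) := by
    rw [hF, hfac, Polynomial.map_mul]
  have hFroots : F.roots = (g.map (Int.castRingHom ℂ)).roots
      + (h.map (Int.castRingHom ℂ)).roots := by
    rw [hFgh]
    apply Polynomial.roots_mul
    rw [← hFgh]
    simpa using (Polynomial.map_ne_zero_iff (f := Int.castRingHom ℂ)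
      Int.cast_injective).mpr hfm.ne_zero
  have hcard : Multiset.card F.roots = m := by
    rw [hF, roots_card_eq, f_natDegree m hm]
  set φ : ℂ → ℝ := fun z => ‖z‖ ^ m with hφ
  set B := F.roots.filter (fun z => 1 < ‖z‖) with hB
  set S := F.roots.filter (fun z => ¬ 1 < ‖z‖) with hS
  have hBS : B + S = F.roots := Multiset.filter_add_not _ _
  have hcardB : 2 ≤ Multiset.card B := by
    rw [hB, hFroots, Multiset.filter_add, Multiset.card_add]
    have h1 : 0 < Multiset.card ((g.map (Int.castRingHom ℂ)).roots.filter
        (fun z => 1 < ‖z‖)) :=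
      Multiset.card_pos_iff_exists_mem.mpr ⟨zg, Multiset.mem_filter.mpr ⟨hzg_mem, hzg⟩⟩
    have h2 : 0 < Multiset.card ((h.map (Int.castRingHom ℂ)).roots.filter
        (fun z => 1 < ‖z‖)) :=
      Multiset.card_pos_iff_exists_mem.mpr ⟨zh, Multiset.mem_filter.mpr ⟨hzh_mem, hzh⟩⟩
    omega
  have hcardS : Multiset.card S ≤ m - 2 := by
    have := congrArg Multiset.card hBS
    rw [Multiset.card_add, hcard] at this
    omega
  have hprodall : ((F.roots).map norm).prod = 1 :=
    prod_abs_roots_eq_one f hfm (by rw [hf0]; rfl)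
  have hprodm : ((F.roots).map φ).prod = 1 := by
    rw [hφ, Multiset.prod_map_pow, hprodall, one_pow]
  -- facts about roots
  have hrootF : ∀ z ∈ F.roots, ‖z‖ ^ m * ‖2 - z‖ = 1 := by
    intro z hz
    have := aeval_of_mem_roots f hfm.ne_zero z hz
    rw [hf, aeval_f] at this
    exact abs_identity m z (root_identity m z this)
  set t : ℝ := 2 - (2/3:ℝ)^m with htdef
  have ht1 : (1:ℝ) ≤ t := by
    have : (2/3:ℝ)^m ≤ 1 := pow_le_one₀ (by norm_num) (by norm_num)
    rw [htdef]; linarith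
  have hB_elem : ∀ x ∈ B.map φ, t^m ≤ x := by
    intro x hx
    obtain ⟨z, hz, rfl⟩ := Multiset.mem_map.mp hx
    rw [hB, Multiset.mem_filter] at hz
    have hid := hrootF z hz.1
    have htri : 2 - ‖2 - z‖ ≤ ‖z‖ := by
      have h := norm_sub_norm_le (2:ℂ) (2 - z)
      have h2 : ‖(2:ℂ)‖ = 2 := by norm_num
      have h3 : (2:ℂ) - (2 - z) = z := by ring
      rw [h3, h2] at h
      linarith
    have hbb := big_root_bound m hm (‖z‖) (‖2-z‖) hz.2
      (norm_nonneg _) hid htri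
    have h23 : (2/3:ℝ)^m ≤ 1 := pow_le_one₀ (by norm_num) (by norm_num)
    rw [htdef]
    exact pow_le_pow_left₀ (by linarith) hbb m
  have hS_elem : ∀ x ∈ S.map φ, (1/3:ℝ) ≤ x := by
    intro x hx
    obtain ⟨z, hz, rfl⟩ := Multiset.mem_map.mp hx
    rw [hS, Multiset.mem_filter] at hz
    have hid := hrootF z hz.1
    have hlt1 : ‖z‖ < 1 := by
      have hne := root_abs_ne_one m hm z (by
        have := aeval_of_mem_roots f hfm.ne_zero z hz.1
        rwa [hf] at this)
      rcases lt_or_eq_of_le (not_lt.mp hz.2) with h | h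
      · exact h
      · exact absurd h hne
    have htri : ‖2 - z‖ ≤ 2 + ‖z‖ := by
      have h := norm_sub_le (2:ℂ) z
      have h2 : ‖(2:ℂ)‖ = 2 := by norm_num
      rw [h2] at h
      exact h
    exact small_root_bound m (‖z‖) (‖2-z‖) hlt1
      (norm_nonneg _) hid htri
  -- combine
  have h1 : (t^m)^(Multiset.card B) ≤ (B.map φ).prod := by
    have := ms_pow_le_prod (B.map φ) (t^m) (pow_nonneg (by linarith) m) hB_elem
    rwa [Multiset.card_map] at this
  have h2 : ((t^m))^2 ≤ (t^m)^(Multiset.card B) :=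
    pow_le_pow_right₀ (one_le_pow₀ ht1) hcardB
  have h3 : ((1/3:ℝ))^(Multiset.card S) ≤ (S.map φ).prod := by
    have := ms_pow_le_prod (S.map φ) (1/3) (by norm_num) hS_elem
    rwa [Multiset.card_map] at this
  have h4 : ((1/3:ℝ))^(m-2) ≤ ((1/3:ℝ))^(Multiset.card S) :=
    pow_le_pow_of_le_one (by norm_num) (by norm_num) hcardS
  have hsplit : ((F.roots).map φ).prod = (B.map φ).prod * (S.map φ).prod := by
    rw [← hBS, Multiset.map_add, Multiset.prod_add]
  have hcomb : ((t^m))^2 * ((1/3:ℝ))^(m-2) ≤ (B.map φ).prod * (S.map φ).prod := by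
    apply mul_le_mul (h2.trans h1) (h4.trans h3) (by positivity)
    exact le_trans (by positivity) (h2.trans h1)
  rw [← hsplit, hprodm] at hcomb
  have hfin := final_ineq m hm
  rw [htdef] at hcomb
  linarith

open Polynomial in
theorem stmt_0 (m : ℕ) (hm : 2 ≤ m) :
    Irreducible ((X : ℤ[X]) ^ m - ∑ i ∈ Finset.range m, X ^ i) := by
  constructor
  · apply Polynomial.not_isUnit_of_natDegree_pos
    rw [f_natDegree m hm]; omega
  · intro a b hab
    by_contra hc
    push_neg at hc
    obtain ⟨ha, hb⟩ := hc
    have hl : a.leadingCoeff * b.leadingCoeff = 1 := by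
      rw [← Polynomial.leadingCoeff_mul, ← hab]
      exact f_monic m hm
    have hdeg : ∀ p : ℤ[X], ¬ IsUnit p → p.Monic → 0 < p.natDegree := by
      intro p hp hpm
      rcases Nat.eq_zero_or_pos p.natDegree with h | h
      · exfalso
        apply hp
        rw [(Polynomial.Monic.natDegree_eq_zero hpm).mp h]
        exact isUnit_one
      · exact h
    rcases Int.mul_eq_one_iff_eq_one_or_neg_one.mp hl with ⟨ha1, hb1⟩ | ⟨ha1, hb1⟩
    · exact no_factorization m hm a b ha1 hb1 (hdeg a ha ha1) (hdeg b hb hb1) hab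
    · have hA : (-a).Monic := by
        unfold Polynomial.Monic
        rw [Polynomial.leadingCoeff_neg, ha1]; ring
      have hB : (-b).Monic := by
        unfold Polynomial.Monic
        rw [Polynomial.leadingCoeff_neg, hb1]; ring
      have hA' : ¬ IsUnit (-a) := fun hu => ha (by simpa using hu.neg)
      have hB' : ¬ IsUnit (-b) := fun hu => hb (by simpa using hu.neg)
      exact no_factorization m hm (-a) (-b) hA hB (hdeg _ hA' hA) (hdeg _ hB' hB)
        (by rw [neg_mul_neg, ← hab])
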